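/- arXiv:2211.16621 — 2 statements merged into one kernel-verified Lean document; each statement's English description precedes it below -/
import Mathlib

section
/- Let H1 and H2 be translates of a strictly convex domain C in ℝ² (i.e., H2 = H1 + x for some x ≠ 0) whose intersection is proper. If q, r, s are three distinct points in bd(H1) ∩ bd(H2), a contradiction follows; hence |bd(H1) ∩ bd(H2)| = 2. -/
open Pointwise
open scoped RealInnerProductSpace Topology
open Filter

abbrev Plane := EuclideanSpace ℝ (Fin 2)

/-- A convex domain: compact, convex, with nonempty interior. -/
def IsConvexDomain (C : Set Plane) : Prop :=
  IsCompact C ∧ Convex ℝ C ∧ (interior C).Nonempty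

/-- A strictly convex domain: a convex domain where the open segment between any two
distinct boundary points lies in the interior. -/
def IsStrictConvexDomain (C : Set Plane) : Prop :=
  IsConvexDomain C ∧
    ∀ x ∈ frontier C, ∀ y ∈ frontier C, x ≠ y → openSegment ℝ x y ⊆ interior C

/-- `u` is an outer unit normal of a supporting line of `C` at `x`. -/
def IsOuterNormalAt (C : Set Plane) (x u : Plane) : Prop :=
  ‖u‖ = 1 ∧ ∀ y ∈ C, (inner ℝ u y : ℝ) ≤ inner ℝ u x

/-- A singular boundary point: a boundary point admitting two distinct supporting lines
(equivalently, two distinct outer unit normals). -/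
def IsSingularPt (C : Set Plane) (x : Plane) : Prop :=
  x ∈ frontier C ∧ ∃ u v : Plane, u ≠ v ∧ IsOuterNormalAt C x u ∧ IsOuterNormalAt C x v

/-- Smooth: every boundary point has a unique outer unit normal (unique supporting line). -/
def IsSmoothDomain (C : Set Plane) : Prop :=
  ∀ x ∈ frontier C, ∃! u : Plane, IsOuterNormalAt C x u

lemma mem_vadd_iff' {s : Set Plane} {x p : Plane} : p ∈ x +ᵥ s ↔ p - x ∈ s := by
  rw [Set.mem_vadd_set_iff_neg_vadd_mem, vadd_eq_add, neg_add_eq_sub]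

lemma mem_interior_vadd_iff {s : Set Plane} {x p : Plane} :
    p ∈ interior (x +ᵥ s) ↔ p - x ∈ interior s := by
  rw [interior_vadd, mem_vadd_iff']

lemma mem_frontier_vadd_iff {s : Set Plane} {x p : Plane} :
    p ∈ frontier (x +ᵥ s) ↔ p - x ∈ frontier s := by
  simp only [frontier, closure_vadd, Set.mem_diff, mem_vadd_iff', mem_interior_vadd_iff]

lemma strictConvexDomain_vadd {C : Set Plane} (hC : IsStrictConvexDomain C) (x : Plane) :
    IsStrictConvexDomain (x +ᵥ C) := by
  obtain ⟨⟨hcomp, hconv, hint⟩, hstrict⟩ := hC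
  refine ⟨⟨?_, hconv.vadd x, ?_⟩, ?_⟩
  · rw [← Set.image_vadd]
    exact hcomp.image (continuous_const_vadd x)
  · obtain ⟨z, hz⟩ := hint
    exact ⟨x + z, mem_interior_vadd_iff.mpr (by simpa using hz)⟩
  · intro a ha b hb hab z hz
    have ha' : a - x ∈ frontier C := mem_frontier_vadd_iff.mp ha
    have hb' : b - x ∈ frontier C := mem_frontier_vadd_iff.mp hb
    have hab' : a - x ≠ b - x := fun h => hab (by
      have := congrArg (· + x) h; simpa using this)
    have hz' : z - x ∈ openSegment ℝ (a - x) (b - x) := by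
      have : z = x + (z - x) := by abel
      rw [show a - x = -x + a by abel, show b - x = -x + b by abel,
        show z - x = -x + z by abel]
      exact (mem_openSegment_translate ℝ (-x)).mpr hz
    exact mem_interior_vadd_iff.mpr (hstrict _ ha' _ hb' hab' hz')

lemma pair_openSegment {D : Set Plane} (hD : IsStrictConvexDomain D) {a b : Plane}
    (ha : a ∈ D) (hb : b ∈ D) (hab : a ≠ b) : openSegment ℝ a b ⊆ interior D := by
  obtain ⟨⟨hcomp, hconv, -⟩, hstrict⟩ := hD
  by_cases hia : a ∈ interior D
  · exact hconv.openSegment_interior_closure_subset_interior hia (subset_closure hb)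
  by_cases hib : b ∈ interior D
  · exact hconv.openSegment_self_interior_subset_interior ha hib
  · exact hstrict a ⟨subset_closure ha, hia⟩ b ⟨subset_closure hb, hib⟩ hab

lemma exists_pos_bump {O : Set Plane} (hO : IsOpen O) {z : Plane} (hz : z ∈ O) (u : Plane) :
    ∃ ε : ℝ, 0 < ε ∧ z + ε • u ∈ O := by
  have hc : ContinuousAt (fun t : ℝ => z + t • u) 0 := by fun_prop
  have h0 : (fun t : ℝ => z + t • u) 0 = z := by simp
  have hev : ∀ᶠ t in 𝓝 (0:ℝ), z + t • u ∈ O := hc (by rw [h0]; exact hO.mem_nhds hz)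
  have hev' : ∀ᶠ t in 𝓝[>] (0:ℝ), z + t • u ∈ O := hev.filter_mono nhdsWithin_le_nhds
  obtain ⟨t, htO, ht⟩ := (hev'.and self_mem_nhdsWithin).exists
  exact ⟨t, ht, htO⟩

lemma exists_perp (v : Plane) (hv : v ≠ 0) :
    ∃ u : Plane, ⟪u, v⟫ = 0 ∧ 0 < ⟪u, u⟫ ∧ ∀ w : Plane, ⟪u, w⟫ = 0 → ∃ c : ℝ, w = c • v := by
  set u : Plane := (WithLp.equiv 2 (Fin 2 → ℝ)).symm ![-(v 1), v 0] with hu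
  have hu0 : u 0 = -(v 1) := by simp [hu]
  have hu1 : u 1 = v 0 := by simp [hu]
  have hne : u ≠ 0 := by
    intro h
    apply hv
    have h0 : u 0 = 0 := by rw [h]; rfl
    have h1 : u 1 = 0 := by rw [h]; rfl
    rw [hu0] at h0
    rw [hu1] at h1
    refine PiLp.ext fun i => ?_
    fin_cases i
    · exact h1
    · simpa using h0
  refine ⟨u, ?_, ?_, ?_⟩
  · simp [PiLp.inner_apply, Fin.sum_univ_two, RCLike.inner_apply, hu0, hu1]
    ring
  · refine lt_of_le_of_ne real_inner_self_nonneg fun h => hne ?_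
    exact (@inner_self_eq_zero ℝ _ _ _ _).mp h.symm
  · intro w hw
    simp only [PiLp.inner_apply, Fin.sum_univ_two, RCLike.inner_apply, hu0, hu1,
      conj_trivial] at hw
    have hvc : v 0 ≠ 0 ∨ v 1 ≠ 0 := by
      by_contra h
      push_neg at h
      exact hv (PiLp.ext fun i => by fin_cases i <;> simp [h.1, h.2])
    rcases hvc with h0 | h1
    · refine ⟨w 0 / v 0, PiLp.ext fun i => ?_⟩
      fin_cases i <;> simp only [PiLp.smul_apply, smul_eq_mul, Fin.zero_eta, Fin.mk_one]
      · field_simp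
      · field_simp
        nlinarith [hw]
    · refine ⟨w 1 / v 1, PiLp.ext fun i => ?_⟩
      fin_cases i <;> simp only [PiLp.smul_apply, smul_eq_mul, Fin.zero_eta, Fin.mk_one]
      · field_simp
        nlinarith [hw]
      · field_simp

lemma key_max (C : Set Plane) (hC : IsStrictConvexDomain C) (x1 v : Plane) (hv : v ≠ 0)
    (u : Plane) (huv : ⟪u, v⟫ = 0) (huu : 0 < ⟪u, u⟫)
    (H1 H2 : Set Plane) (hH1 : H1 = x1 +ᵥ C) (hH2 : H2 = v +ᵥ H1)
    {p : Plane} (hpK : p ∈ H1 ∩ H2)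
    (hmax : ∀ q ∈ H1 ∩ H2, ⟪u, q⟫ ≤ ⟪u, p⟫) :
    (p ∈ frontier H1 ∩ frontier H2) ∧ ∀ q ∈ H1 ∩ H2, ⟪u, q⟫ = ⟪u, p⟫ → q = p := by
  have hSC1 : IsStrictConvexDomain H1 := hH1 ▸ strictConvexDomain_vadd hC x1
  have hSC2 : IsStrictConvexDomain H2 := by
    rw [hH2, hH1, vadd_vadd]; exact strictConvexDomain_vadd hC _
  have hconv1 : Convex ℝ H1 := hSC1.1.2.1
  have hconv2 : Convex ℝ H2 := hSC2.1.2.1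
  have hm2 : ∀ q : Plane, q ∈ H2 ↔ q - v ∈ H1 := fun q => by
    rw [hH2]; exact mem_vadd_iff'
  have hfv : ∀ q : Plane, ⟪u, q - v⟫ = ⟪u, q⟫ := fun q => by
    rw [inner_sub_right, huv, sub_zero]
  have hfv' : ∀ q : Plane, ⟪u, q + v⟫ = ⟪u, q⟫ := fun q => by
    rw [inner_add_right, huv, add_zero]
  have hbump : ∀ (S : Set Plane) (z : Plane), z ∈ interior S →
      ∃ w ∈ S, ⟪u, z⟫ < ⟪u, w⟫ := by
    intro S z hz
    obtain ⟨ε, hε, hw⟩ := exists_pos_bump isOpen_interior hz u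
    refine ⟨z + ε • u, interior_subset hw, ?_⟩
    rw [inner_add_right, inner_smul_right]
    nlinarith
  have hmid : ∀ (D : Set Plane), IsStrictConvexDomain D → ∀ a b : Plane, a ∈ D → b ∈ D →
      a ≠ b → ⟪u, a⟫ = ⟪u, b⟫ → ∃ w ∈ D, ⟪u, a⟫ < ⟪u, w⟫ := by
    intro D hD a b ha hb hab hfab
    have hseg := pair_openSegment hD ha hb hab
    have hμ : (1/2 : ℝ) • a + (1/2 : ℝ) • b ∈ openSegment ℝ a b :=
      ⟨1/2, 1/2, by norm_num, by norm_num, by norm_num, rfl⟩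
    obtain ⟨w, hw, hlt⟩ := hbump D _ (hseg hμ)
    refine ⟨w, hw, ?_⟩
    rw [inner_add_right, inner_smul_right, inner_smul_right, ← hfab] at hlt
    linarith
  obtain ⟨hp1, hp2⟩ := hpK
  have hcont : Continuous fun q : Plane => ⟪u, q⟫ := continuous_const.inner continuous_id
  obtain ⟨q1, hq1mem, hq1max⟩ := hSC1.1.1.exists_isMaxOn ⟨p, hp1⟩ hcont.continuousOn
  obtain ⟨q2, hq2mem, hq2max⟩ := hSC2.1.1.exists_isMaxOn ⟨p, hp2⟩ hcont.continuousOn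
  have hq2 : ⟪u, p⟫ < ⟪u, q2⟫ := by
    rcases lt_or_ge ⟪u, p⟫ ⟪u, q2⟫ with h | h
    · exact h
    · exfalso
      have hmax2 : ∀ y ∈ H2, ⟪u, y⟫ ≤ ⟪u, p⟫ := fun y hy => le_trans (hq2max hy) h
      have hpv1 : p - v ∈ H1 := (hm2 p).mp hp2
      have hne : p ≠ p - v := fun h' => hv (sub_eq_self.mp h'.symm)
      obtain ⟨w, hw1, hlt⟩ := hmid H1 hSC1 p (p - v) hp1 hpv1 hne (hfv p).symm
      have hle : ⟪u, w⟫ ≤ ⟪u, p⟫ := by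
        have hwv : w + v ∈ H2 := (hm2 _).mpr (by simpa using hw1)
        calc ⟪u, w⟫ = ⟪u, w + v⟫ := (hfv' w).symm
          _ ≤ ⟪u, p⟫ := hmax2 _ hwv
      linarith
  have hq1 : ⟪u, p⟫ < ⟪u, q1⟫ := by
    rcases lt_or_ge ⟪u, p⟫ ⟪u, q1⟫ with h | h
    · exact h
    · exfalso
      have hmax1 : ∀ y ∈ H1, ⟪u, y⟫ ≤ ⟪u, p⟫ := fun y hy => le_trans (hq1max hy) h
      have hpv2 : p + v ∈ H2 := (hm2 _).mpr (by simpa using hp1)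
      have hne : p ≠ p + v := fun h' => hv (left_eq_add.mp h')
      obtain ⟨w, hw2, hlt⟩ := hmid H2 hSC2 p (p + v) hp2 hpv2 hne (hfv' p).symm
      have hle : ⟪u, w⟫ ≤ ⟪u, p⟫ := by
        have hwv : w - v ∈ H1 := (hm2 _).mp hw2
        calc ⟪u, w⟫ = ⟪u, w - v⟫ := (hfv w).symm
          _ ≤ ⟪u, p⟫ := hmax1 _ hwv
      linarith
  have hwalk : ∀ (A B : Set Plane), Convex ℝ B → p ∈ interior A → p ∈ B →
      ∀ q : Plane, q ∈ B → ⟪u, p⟫ < ⟪u, q⟫ → ∃ w, w ∈ A ∩ B ∧ ⟪u, p⟫ < ⟪u, w⟫ := by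
    intro A B hB hpA hpB q hqB hpq
    have hc : ContinuousAt (fun t : ℝ => p + t • (q - p)) 0 := by fun_prop
    have hev : ∀ᶠ t in 𝓝 (0:ℝ), p + t • (q - p) ∈ interior A :=
      hc (by simpa using isOpen_interior.mem_nhds hpA)
    have hev' : ∀ᶠ t in 𝓝[>] (0:ℝ), (p + t • (q - p) ∈ interior A) ∧ t < 1 :=
      ((hev.and (eventually_lt_nhds zero_lt_one)).filter_mono nhdsWithin_le_nhds)
    obtain ⟨t, ⟨htA, ht1⟩, ht0⟩ := (hev'.and self_mem_nhdsWithin).exists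
    have ht0 : (0:ℝ) < t := ht0
    refine ⟨p + t • (q - p), ⟨interior_subset htA, ?_⟩, ?_⟩
    · have : (1 - t) • p + t • q ∈ B := hB hpB hqB (by linarith) (le_of_lt ht0) (by ring)
      convert this using 1
      module
    · rw [inner_add_right, inner_smul_right, inner_sub_right]
      nlinarith
  have hni1 : p ∉ interior H1 := by
    intro hp
    obtain ⟨w, hwK, hlt⟩ := hwalk H1 H2 hconv2 hp hp2 q2 hq2mem hq2
    exact absurd (hmax w hwK) (not_le.mpr hlt)
  have hni2 : p ∉ interior H2 := by
    intro hp
    obtain ⟨w, hwK, hlt⟩ := hwalk H2 H1 hconv1 hp hp1 q1 hq1mem hq1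
    exact absurd (hmax w ⟨hwK.2, hwK.1⟩) (not_le.mpr hlt)
  refine ⟨⟨⟨subset_closure hp1, hni1⟩, ⟨subset_closure hp2, hni2⟩⟩, ?_⟩
  intro q hqK hfq
  by_contra hne
  have hseg1 := pair_openSegment hSC1 hqK.1 hp1 hne
  have hseg2 := pair_openSegment hSC2 hqK.2 hp2 hne
  have hμseg : (1/2 : ℝ) • q + (1/2 : ℝ) • p ∈ openSegment ℝ q p :=
    ⟨1/2, 1/2, by norm_num, by norm_num, by norm_num, rfl⟩
  have hμ : (1/2 : ℝ) • q + (1/2 : ℝ) • p ∈ interior (H1 ∩ H2) := by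
    rw [interior_inter]
    exact ⟨hseg1 hμseg, hseg2 hμseg⟩
  obtain ⟨w, hwK, hlt⟩ := hbump (H1 ∩ H2) _ hμ
  rw [inner_add_right, inner_smul_right, inner_smul_right, hfq] at hlt
  have := hmax w hwK
  linarith

theorem stmt1 (C : Set Plane) (hC : IsStrictConvexDomain C)
    (x1 x2 : Plane) (hx : x1 ≠ x2)
    (H1 H2 : Set Plane) (hH1 : H1 = x1 +ᵥ C) (hH2 : H2 = x2 +ᵥ C)
    (hint : (interior (H1 ∩ H2)).Nonempty)
    (hred1 : H1 ∩ H2 ⊂ H1) (hred2 : H1 ∩ H2 ⊂ H2) :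
    (frontier H1 ∩ frontier H2).encard = 2 := by
  set v := x2 - x1 with hvdef
  have hv : v ≠ 0 := sub_ne_zero.mpr (Ne.symm hx)
  obtain ⟨u, huv, huu, hker⟩ := exists_perp v hv
  have hH2' : H2 = v +ᵥ H1 := by rw [hH2, hH1, vadd_vadd, hvdef, sub_add_cancel]
  have hSC1 : IsStrictConvexDomain H1 := hH1 ▸ strictConvexDomain_vadd hC x1
  have hSC2 : IsStrictConvexDomain H2 := hH2 ▸ strictConvexDomain_vadd hC x2
  have hcont : Continuous fun q : Plane => ⟪u, q⟫ := continuous_const.inner continuous_id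
  have hKcomp : IsCompact (H1 ∩ H2) := hSC1.1.1.inter_right hSC2.1.1.isClosed
  have hKne : (H1 ∩ H2).Nonempty := hint.mono interior_subset
  obtain ⟨pmax, hpmaxK, hpmaxmax⟩ := hKcomp.exists_isMaxOn hKne hcont.continuousOn
  obtain ⟨pmin, hpminK, hpminmin⟩ := hKcomp.exists_isMinOn hKne hcont.continuousOn
  have hmax' : ∀ q ∈ H1 ∩ H2, ⟪u, q⟫ ≤ ⟪u, pmax⟫ := fun q hq => hpmaxmax hq
  have hmin' : ∀ q ∈ H1 ∩ H2, ⟪u, pmin⟫ ≤ ⟪u, q⟫ := fun q hq => hpminmin hq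
  obtain ⟨hpmaxfr, hpmaxuniq⟩ := key_max C hC x1 v hv u huv huu H1 H2 hH1 hH2' hpmaxK hmax'
  have huv' : ⟪-u, v⟫ = 0 := by rw [inner_neg_left, huv, neg_zero]
  have huu' : (0:ℝ) < ⟪-u, -u⟫ := by rwa [inner_neg_neg]
  obtain ⟨hpminfr, hpminuniq'⟩ := key_max C hC x1 v hv (-u) huv' huu' H1 H2 hH1 hH2' hpminK
    (fun q hq => by rw [inner_neg_left, inner_neg_left]; exact neg_le_neg (hmin' q hq))
  have hpminuniq : ∀ q ∈ H1 ∩ H2, ⟪u, q⟫ = ⟪u, pmin⟫ → q = pmin := fun q hq h =>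
    hpminuniq' q hq (by rw [inner_neg_left, inner_neg_left, h])
  have hlt : ⟪u, pmin⟫ < ⟪u, pmax⟫ := by
    rcases eq_or_lt_of_le (hmin' pmax hpmaxK) with h | h
    · exfalso
      obtain ⟨z, hz⟩ := hint
      have hzK := interior_subset hz
      have h1 : ⟪u, z⟫ = ⟪u, pmax⟫ := le_antisymm (hmax' z hzK) (h ▸ hmin' z hzK)
      obtain ⟨ε, hε, hw⟩ := exists_pos_bump isOpen_interior hz u
      have h2 := hmax' _ (interior_subset hw)
      rw [inner_add_right, inner_smul_right] at h2
      nlinarith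
    · exact h
  have hne : pmax ≠ pmin := by
    intro h
    rw [h] at hlt
    exact lt_irrefl _ hlt
  have hset : frontier H1 ∩ frontier H2 = {pmax, pmin} := by
    apply Set.Subset.antisymm
    · rintro p ⟨hpf1, hpf2⟩
      have hp1 : p ∈ H1 := hSC1.1.1.isClosed.frontier_subset hpf1
      have hp2 : p ∈ H2 := hSC2.1.1.isClosed.frontier_subset hpf2
      have hpK : p ∈ H1 ∩ H2 := ⟨hp1, hp2⟩
      by_cases hfmax : ⟪u, p⟫ = ⟪u, pmax⟫
      · exact Or.inl (hpmaxuniq p hpK hfmax)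
      by_cases hfmin : ⟪u, p⟫ = ⟪u, pmin⟫
      · exact Or.inr (hpminuniq p hpK hfmin)
      exfalso
      have hlt1 : ⟪u, pmin⟫ < ⟪u, p⟫ := lt_of_le_of_ne (hmin' p hpK) (Ne.symm hfmin)
      have hlt2 : ⟪u, p⟫ < ⟪u, pmax⟫ := lt_of_le_of_ne (hmax' p hpK) hfmax
      have hΔpos : (0:ℝ) < ⟪u, pmax⟫ - ⟪u, pmin⟫ := by linarith
      set t := (⟪u, p⟫ - ⟪u, pmin⟫) / (⟪u, pmax⟫ - ⟪u, pmin⟫) with ht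
      have ht0 : 0 < t := div_pos (by linarith) hΔpos
      have ht1 : t < 1 := (div_lt_one hΔpos).mpr (by linarith)
      set m := pmin + t • (pmax - pmin) with hm
      have hmseg : m ∈ openSegment ℝ pmin pmax := by
        rw [openSegment_eq_image']
        exact ⟨t, ⟨ht0, ht1⟩, rfl⟩
      have hne' : pmin ≠ pmax := Ne.symm hne
      have hm1 : m ∈ interior H1 := pair_openSegment hSC1 hpminK.1 hpmaxK.1 hne' hmseg
      have hm2 : m ∈ interior H2 := pair_openSegment hSC2 hpminK.2 hpmaxK.2 hne' hmseg
      have hfm : ⟪u, m⟫ = ⟪u, p⟫ := by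
        have hΔne : ⟪u, pmax⟫ - ⟪u, pmin⟫ ≠ 0 := ne_of_gt hΔpos
        rw [hm, inner_add_right, inner_smul_right, inner_sub_right, ht,
          div_mul_cancel₀ _ hΔne]
        ring
      obtain ⟨c, hc⟩ := hker (p - m) (by rw [inner_sub_right, hfm, sub_self])
      have hcne : c ≠ 0 := by
        intro h
        rw [h, zero_smul, sub_eq_zero] at hc
        exact hpf1.2 (hc ▸ hm1)
      have hmeq : m = p - c • v := by rw [← hc]; abel
      have hf2' : ∀ q : Plane, q ∈ frontier H2 ↔ q - v ∈ frontier H1 := fun q => by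
        rw [hH2']; exact mem_frontier_vadd_iff
      have hi2' : ∀ q : Plane, q ∈ interior H2 ↔ q - v ∈ interior H1 := fun q => by
        rw [hH2']; exact mem_interior_vadd_iff
      have hpv_fr : p - v ∈ frontier H1 := (hf2' p).mp hpf2
      have hmv_int : m - v ∈ interior H1 := (hi2' m).mp hm2
      rcases lt_or_gt_of_ne hcne with hcneg | hcpos
      · -- c < 0 : p ∈ openSegment m (p - v) ⊆ interior H1
        have hpv1 : p - v ∈ H1 := hSC1.1.1.isClosed.frontier_subset hpv_fr
        have hsub : openSegment ℝ m (p - v) ⊆ interior H1 :=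
          hSC1.1.2.1.openSegment_interior_closure_subset_interior hm1 (subset_closure hpv1)
        set s := c / (c - 1) with hs
        have hsc : s * (c - 1) = c := div_mul_cancel₀ c (by linarith : c - 1 ≠ 0)
        have hs0 : 0 < s := by nlinarith
        have hs1 : s < 1 := by nlinarith
        have hpmem : p ∈ openSegment ℝ m (p - v) := by
          rw [openSegment_eq_image']
          refine ⟨s, ⟨hs0, hs1⟩, ?_⟩
          have h1 : (p - v) - m = (c - 1) • v := by rw [hmeq]; module
          show m + s • ((p - v) - m) = p
          rw [h1, smul_smul, hsc, hmeq]
          module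
        exact hpf1.2 (hsub hpmem)
      · -- c > 0 : p - v ∈ openSegment (m - v) p ⊆ interior H1
        have hsub : openSegment ℝ (m - v) p ⊆ interior H1 :=
          hSC1.1.2.1.openSegment_interior_closure_subset_interior hmv_int (subset_closure hp1)
        set s := c / (c + 1) with hs
        have hsc : s * (c + 1) = c := div_mul_cancel₀ c (by linarith : c + 1 ≠ 0)
        have hs0 : 0 < s := by positivity
        have hs1 : s < 1 := by rw [hs, div_lt_one (by linarith)]; linarith
        have hpmem : p - v ∈ openSegment ℝ (m - v) p := by
          rw [openSegment_eq_image']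
          refine ⟨s, ⟨hs0, hs1⟩, ?_⟩
          have h1 : p - (m - v) = (c + 1) • v := by rw [hmeq]; module
          show (m - v) + s • (p - (m - v)) = p - v
          rw [h1, smul_smul, hsc, hmeq]
          module
        exact hpv_fr.2 (hsub hpmem)
    · rintro p (rfl | rfl)
      exacts [hpmaxfr, hpminfr]
  rw [hset]
  exact Set.encard_pair hne
end

section
/- Let H = ⋂ᵢ₌₁ⁿ Hᵢ be a proper intersection of n ≥ 2 homothets of a smooth strictly convex domain C in ℝ². Then H has at least n singular boundary points. -/
open Pointwise
open scoped RealInnerProductSpace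

open Real Topology Filter

/-- The homothety as a homeomorphism. -/
noncomputable def homo (x : Plane) {l : ℝ} (hl : l ≠ 0) : Plane ≃ₜ Plane :=
  (Homeomorph.smulOfNeZero l hl).trans (Homeomorph.addLeft x)

lemma homo_apply (x : Plane) {l : ℝ} (hl : l ≠ 0) (c : Plane) : homo x hl c = x + l • c := rfl

lemma homothet_eq_image (x : Plane) {l : ℝ} (hl : l ≠ 0) (s : Set Plane) :
    x +ᵥ l • s = homo x hl '' s := by
  ext z
  simp only [Set.mem_vadd_set, Set.mem_smul_set, Set.mem_image, homo_apply]
  constructor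
  · rintro ⟨y, ⟨c, hc, rfl⟩, rfl⟩; exact ⟨c, hc, rfl⟩
  · rintro ⟨c, hc, rfl⟩; exact ⟨l • c, ⟨c, hc, rfl⟩, rfl⟩

lemma interior_homothet (x : Plane) {l : ℝ} (hl : l ≠ 0) (s : Set Plane) :
    interior (x +ᵥ l • s) = x +ᵥ l • interior s := by
  rw [homothet_eq_image x hl, homothet_eq_image x hl, (homo x hl).image_interior]

lemma frontier_homothet (x : Plane) {l : ℝ} (hl : l ≠ 0) (s : Set Plane) :
    frontier (x +ᵥ l • s) = x +ᵥ l • frontier s := by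
  rw [homothet_eq_image x hl, homothet_eq_image x hl, (homo x hl).image_frontier]

lemma isOuterNormalAt_homothet {C : Set Plane} (x : Plane) {l : ℝ} (hl : 0 < l) (c u : Plane) :
    IsOuterNormalAt (x +ᵥ l • C) (x + l • c) u ↔ IsOuterNormalAt C c u := by
  have key : ∀ y : Plane, (inner ℝ u (x + l • y) : ℝ) = inner ℝ u x + l * inner ℝ u y := by
    intro y; rw [inner_add_right, real_inner_smul_right]
  constructor
  · rintro ⟨h1, h2⟩
    refine ⟨h1, fun y hy => ?_⟩
    have := h2 (x + l • y) ?_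
    · rw [key, key] at this; nlinarith [hl]
    · rw [homothet_eq_image x hl.ne', Set.mem_image]; exact ⟨y, hy, rfl⟩
  · rintro ⟨h1, h2⟩
    refine ⟨h1, fun z hz => ?_⟩
    rw [homothet_eq_image x hl.ne', Set.mem_image] at hz
    obtain ⟨y, hy, rfl⟩ := hz
    rw [homo_apply, key, key]
    have := h2 y hy
    nlinarith [hl]

/-- Existence of an outer unit normal at a boundary point of a closed convex set with
nonempty interior. -/
lemma exists_outer_normal {s : Set Plane} (hcv : Convex ℝ s) (hcl : IsClosed s)
    (hne : (interior s).Nonempty) {p : Plane} (hp : p ∈ frontier s) :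
    ∃ u : Plane, IsOuterNormalAt s p u := by
  obtain ⟨o, ho⟩ := hne
  have hpi : p ∉ interior s := fun h => hp.2 h
  obtain ⟨f, hf⟩ := geometric_hahn_banach_open_point (hcv.interior) isOpen_interior hpi
  have hfle : ∀ y ∈ s, f y ≤ f p := by
    intro y hy
    have hev : ∀ t ∈ Set.Ioo (0:ℝ) 1, t * f o + (1 - t) * f y < f p := by
      intro t ht
      have hmem : t • o + (1 - t) • y ∈ interior s :=
        hcv.combo_interior_closure_mem_interior ho (subset_closure hy) ht.1
          (by linarith [ht.2]) (by ring)
      have := hf _ hmem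
      simpa [map_add, map_smul, smul_eq_mul] using this
    have htend : Filter.Tendsto (fun t : ℝ => t * f o + (1 - t) * f y)
        (nhdsWithin 0 (Set.Ioi 0)) (nhds (f y)) := by
      have : Filter.Tendsto (fun t : ℝ => t * f o + (1 - t) * f y) (nhds 0)
          (nhds (0 * f o + (1 - 0) * f y)) :=
        ((continuous_id.mul continuous_const).add
          ((continuous_const.sub continuous_id).mul continuous_const)).tendsto 0
      simpa using this.mono_left nhdsWithin_le_nhds
    refine le_of_tendsto htend ?_
    filter_upwards [Ioo_mem_nhdsGT_of_mem (by norm_num : (0:ℝ) ∈ Set.Ico (0:ℝ) 1)] with t ht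
    exact (hev t ht).le
  set u₀ := (InnerProductSpace.toDual ℝ Plane).symm f with hu₀
  have hu₀app : ∀ y, ⟪u₀, y⟫ = f y := fun y => by
    rw [hu₀, InnerProductSpace.toDual_symm_apply]
  have hu₀ne : u₀ ≠ 0 := by
    intro h
    have h1 := hf o ho
    have h2 := hu₀app o
    have h3 := hu₀app p
    rw [h] at h2 h3
    simp only [inner_zero_left] at h2 h3
    rw [← h2, ← h3] at h1
    exact lt_irrefl _ h1
  refine ⟨‖u₀‖⁻¹ • u₀, ?_, fun y hy => ?_⟩
  · rw [norm_smul, norm_inv, norm_norm, inv_mul_cancel₀ (norm_ne_zero_iff.mpr hu₀ne)]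
  · rw [real_inner_smul_left, real_inner_smul_left, hu₀app, hu₀app]
    have h1 : (0:ℝ) ≤ ‖u₀‖⁻¹ := inv_nonneg.mpr (norm_nonneg _)
    exact mul_le_mul_of_nonneg_left (hfle y hy) h1


/-- Interior points are not maximizers of a nonzero linear functional. -/
lemma interior_lt_max {s : Set Plane} {u : Plane} (hu : u ≠ 0) {c : Plane}
    (hmax : ∀ y ∈ s, ⟪u, y⟫ ≤ ⟪u, c⟫) {z : Plane} (hz : z ∈ interior s) :
    ⟪u, z⟫ < ⟪u, c⟫ := by
  obtain ⟨ε, hε, hball⟩ := Metric.isOpen_iff.mp isOpen_interior z hz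
  have hun : (0:ℝ) < ‖u‖ := norm_pos_iff.mpr hu
  set w := z + (ε / 2 / ‖u‖) • u with hw
  have hwmem : w ∈ s := by
    apply interior_subset (hball ?_)
    rw [Metric.mem_ball, dist_eq_norm, hw]
    simp only [add_sub_cancel_left, norm_smul]
    rw [Real.norm_eq_abs, abs_of_pos (by positivity)]
    rw [div_mul_cancel₀ _ hun.ne']
    linarith
  have := hmax w hwmem
  rw [hw, inner_add_right, real_inner_smul_right, real_inner_self_eq_norm_sq] at this
  have hpos : 0 < ε / 2 / ‖u‖ * ‖u‖ ^ 2 := by positivity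
  linarith

/-- Uniqueness of the maximizer on a strictly convex domain. -/
lemma strict_max_unique {C : Set Plane} (hC : IsStrictConvexDomain C) {u : Plane} (hu : u ≠ 0)
    {c c' : Plane} (hc : c ∈ C) (hc' : c' ∈ C) (hmax : ∀ y ∈ C, ⟪u, y⟫ ≤ ⟪u, c⟫)
    (hmax' : ∀ y ∈ C, ⟪u, y⟫ ≤ ⟪u, c'⟫) : c = c' := by
  obtain ⟨⟨hcp, hcv, hne⟩, hstrict⟩ := hC
  have hcl : IsClosed C := hcp.isClosed
  by_contra hne'
  have heq : ⟪u, c⟫ = ⟪u, c'⟫ := le_antisymm (hmax' c hc) (hmax c' hc')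
  have hcf : c ∈ frontier C := by
    rw [hcl.frontier_eq]
    exact ⟨hc, fun h => lt_irrefl _ (interior_lt_max hu hmax h)⟩
  have hcf' : c' ∈ frontier C := by
    rw [hcl.frontier_eq]
    exact ⟨hc', fun h => lt_irrefl _ (interior_lt_max hu hmax' h)⟩
  have hmid : (1/2 : ℝ) • c + (1/2 : ℝ) • c' ∈ openSegment ℝ c c' :=
    ⟨1/2, 1/2, by norm_num, by norm_num, by norm_num, rfl⟩
  have hmidint := hstrict c hcf c' hcf' hne' hmid
  have := interior_lt_max hu hmax hmidint
  rw [inner_add_right, real_inner_smul_right, real_inner_smul_right, heq] at this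
  linarith

/-- If two homothets share a common support point in the same direction, the smaller is
contained in the larger. -/
lemma homothet_subset {C : Set Plane} (hcv : Convex ℝ C) {x₁ x₂ s : Plane} {l₁ l₂ : ℝ}
    (h1 : 0 < l₁) (h2 : 0 < l₂) (hle : l₁ ≤ l₂) (hs : s ∈ C)
    (hpt : x₁ + l₁ • s = x₂ + l₂ • s) :
    x₁ +ᵥ l₁ • C ⊆ x₂ +ᵥ l₂ • C := by
  intro z hz
  rw [homothet_eq_image x₁ h1.ne', Set.mem_image] at hz
  obtain ⟨c, hc, rfl⟩ := hz
  rw [homothet_eq_image x₂ h2.ne', Set.mem_image]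
  refine ⟨(1 - l₁/l₂) • s + (l₁/l₂) • c, ?_, ?_⟩
  · apply hcv hs hc (by rw [sub_nonneg]; exact div_le_one_of_le₀ hle h2.le)
      (by positivity) (by ring)
  · rw [homo_apply, homo_apply]
    have hx2 : x₂ = x₁ + l₁ • s - l₂ • s := by
      linear_combination (norm := module) -hpt
    rw [hx2, smul_add, smul_smul, smul_smul, mul_div_cancel₀ _ h2.ne']
    have hsc : l₂ * (1 - l₁ / l₂) = l₂ - l₁ := by field_simp
    rw [hsc, sub_smul]
    module

noncomputable def dirP (θ : ℝ) : Plane :=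
  (EuclideanSpace.equiv (Fin 2) ℝ).symm ![Real.cos θ, Real.sin θ]

lemma dirP_apply0 (θ : ℝ) : dirP θ 0 = Real.cos θ := rfl
lemma dirP_apply1 (θ : ℝ) : dirP θ 1 = Real.sin θ := rfl

lemma dirP_norm (θ : ℝ) : ‖dirP θ‖ = 1 := by
  rw [EuclideanSpace.norm_eq, Fin.sum_univ_two, dirP_apply0, dirP_apply1]
  simp only [Real.norm_eq_abs, sq_abs]
  rw [Real.cos_sq_add_sin_sq, Real.sqrt_one]

lemma dirP_ne (θ : ℝ) : dirP θ ≠ 0 := by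
  intro h
  have := dirP_norm θ
  rw [h, norm_zero] at this
  norm_num at this

lemma dirP_cont : Continuous dirP := by
  apply (EuclideanSpace.equiv (Fin 2) ℝ).symm.continuous.comp
  apply continuous_pi
  intro i
  fin_cases i
  · simpa using Real.continuous_cos
  · simpa using Real.continuous_sin

lemma dirP_periodic (θ : ℝ) : dirP (θ + 2 * π) = dirP θ := by
  unfold dirP
  rw [Real.cos_add_two_pi, Real.sin_add_two_pi]

lemma dirP_inj_mod {τ τ' : ℝ} (h : dirP τ = dirP τ') : ∃ m : ℤ, τ - τ' = 2 * π * m := by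
  have hc : Real.cos τ = Real.cos τ' := by
    have := congrArg (fun v : Plane => v 0) h
    simpa [dirP_apply0] using this
  have hs : Real.sin τ = Real.sin τ' := by
    have := congrArg (fun v : Plane => v 1) h
    simpa [dirP_apply1] using this
  have := Real.Angle.cos_sin_inj hc hs
  rw [Real.Angle.angle_eq_iff_two_pi_dvd_sub] at this
  obtain ⟨k, hk⟩ := this
  exact ⟨k, hk⟩

lemma exists_theta {v : Plane} (hv : v ≠ 0) :
    ∃ θ ∈ Set.Ioc (-π) π, dirP θ = ‖v‖⁻¹ • v := by
  set z : ℂ := ⟨v 0, v 1⟩ with hz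
  have habs : ‖z‖ = ‖v‖ := by
    rw [Complex.norm_def, Complex.normSq_mk, EuclideanSpace.norm_eq, Fin.sum_univ_two]
    simp [Real.norm_eq_abs, sq_abs, sq]
  have hzne : z ≠ 0 := by
    intro h
    apply hv
    have : ‖v‖ = 0 := by rw [← habs, h, norm_zero]
    exact norm_eq_zero.mp this
  refine ⟨z.arg, Complex.arg_mem_Ioc z, ?_⟩
  apply (EuclideanSpace.equiv (Fin 2) ℝ).injective
  funext i
  fin_cases i
  · show Real.cos z.arg = (‖v‖⁻¹ • v) 0
    rw [Complex.cos_arg hzne, habs]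
    simp [div_eq_inv_mul, hz]
  · show Real.sin z.arg = (‖v‖⁻¹ • v) 1
    rw [Complex.sin_arg, habs]
    simp [div_eq_inv_mul, hz]

lemma exists_param {s : Set Plane} (hcv : Convex ℝ s) (hcp : IsCompact s) {o : Plane}
    (ho : o ∈ interior s) :
    ∃ T : ℝ → Plane, Continuous T ∧ (∀ θ, T θ ∈ frontier s) ∧
      (∀ θ, T (θ + 2 * π) = T θ) ∧
      (∀ τ τ', T τ = T τ' → ∃ m : ℤ, τ - τ' = 2 * π * m) ∧
      (∀ p ∈ frontier s, ∃ θ ∈ Set.Ioc (-π) π, T θ = p) := by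
  set A := (-o) +ᵥ s with hA
  have hmemA : ∀ (t : Set Plane) (w : Plane), w ∈ (-o) +ᵥ t ↔ o + w ∈ t := by
    intro t w
    constructor
    · rintro ⟨y, hy, rfl⟩
      simpa [vadd_eq_add, ← add_assoc] using hy
    · intro h
      exact ⟨o + w, h, by simp [vadd_eq_add, ← add_assoc]⟩
  have hAimg : ∀ t : Set Plane, (-o) +ᵥ t = (Homeomorph.addLeft (-o)) '' t := by
    intro t
    ext w
    rw [hmemA]
    simp only [Set.mem_image, Homeomorph.coe_addLeft]
    constructor
    · intro h; exact ⟨o + w, h, by abel⟩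
    · rintro ⟨y, hy, rfl⟩; simpa [← add_assoc] using hy
  have hfrA : frontier A = (-o) +ᵥ frontier s := by
    rw [hA, hAimg, hAimg, Homeomorph.image_frontier]
  have hintA : interior A = (-o) +ᵥ interior s := by
    rw [hA, hAimg, hAimg, Homeomorph.image_interior]
  have h0A : (0 : Plane) ∈ interior A := by
    rw [hintA, hmemA]
    simpa using ho
  have hnhds : A ∈ 𝓝 (0 : Plane) := mem_interior_iff_mem_nhds.mp h0A
  have hcvA : Convex ℝ A := hcv.vadd _
  have hcpA : IsCompact A := by
    rw [hA, hAimg]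
    exact hcp.image (Homeomorph.addLeft (-o)).continuous
  have habs : Absorbent ℝ A := absorbent_nhds_zero hnhds
  have hbdd : Bornology.IsVonNBounded ℝ A :=
    NormedSpace.isVonNBounded_iff ℝ |>.mpr hcpA.isBounded
  set g := gauge A with hg
  have hgpos : ∀ θ, 0 < g (dirP θ) := fun θ => (gauge_pos habs hbdd).mpr (dirP_ne θ)
  set T := fun θ : ℝ => o + (g (dirP θ))⁻¹ • dirP θ with hT
  have hgcont : Continuous g := continuous_gauge hcvA hnhds
  have hTcont : Continuous T := by
    apply continuous_const.add
    exact ((hgcont.comp dirP_cont).inv₀ fun θ => (hgpos θ).ne').smul dirP_cont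
  have hTfr : ∀ θ, T θ ∈ frontier s := by
    intro θ
    have h1 : g ((g (dirP θ))⁻¹ • dirP θ) = 1 := by
      rw [hg, gauge_smul_of_nonneg (inv_nonneg.mpr (hgpos θ).le), smul_eq_mul,
        inv_mul_cancel₀ (hgpos θ).ne']
    have h2 := (gauge_eq_one_iff_mem_frontier hcvA hnhds).mp h1
    rw [hfrA, hmemA] at h2
    exact h2
  have hTper : ∀ θ, T (θ + 2 * π) = T θ := by
    intro θ
    simp only [hT, dirP_periodic]
  have hTinj : ∀ τ τ', T τ = T τ' → ∃ m : ℤ, τ - τ' = 2 * π * m := by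
    intro τ τ' h
    have h2 : (g (dirP τ))⁻¹ • dirP τ = (g (dirP τ'))⁻¹ • dirP τ' := by
      have := congrArg (fun w => w - o) h
      simpa [hT, add_sub_cancel_left] using this
    have h3 : (g (dirP τ))⁻¹ = (g (dirP τ'))⁻¹ := by
      have := congrArg norm h2
      rw [norm_smul, norm_smul, dirP_norm, dirP_norm, mul_one, mul_one, Real.norm_eq_abs,
        Real.norm_eq_abs, abs_of_pos (inv_pos.mpr (hgpos τ)),
        abs_of_pos (inv_pos.mpr (hgpos τ'))] at this
      exact this
    rw [h3] at h2
    have h4 : dirP τ = dirP τ' :=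
      smul_right_injective Plane (inv_ne_zero (hgpos τ').ne') h2
    exact dirP_inj_mod h4
  refine ⟨T, hTcont, hTfr, hTper, hTinj, ?_⟩
  intro p hp
  have hpo : p ≠ o := by
    intro h
    rw [h] at hp
    exact hp.2 ho
  set v := p - o with hv
  have hvne : v ≠ 0 := sub_ne_zero.mpr hpo
  obtain ⟨θ, hθmem, hθdir⟩ := exists_theta hvne
  have hgv : g v = 1 := by
    apply (gauge_eq_one_iff_mem_frontier hcvA hnhds).mpr
    rw [hfrA, hmemA]
    have hov : o + v = p := by rw [hv]; abel
    rw [hov]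
    exact hp
  have hgd : g (dirP θ) = ‖v‖⁻¹ := by
    rw [hθdir, hg, gauge_smul_of_nonneg (inv_nonneg.mpr (norm_nonneg v)), smul_eq_mul, ← hg,
      hgv, mul_one]
  refine ⟨θ, hθmem, ?_⟩
  show o + (g (dirP θ))⁻¹ • dirP θ = p
  rw [hgd, hθdir, inv_inv, smul_smul, mul_inv_cancel₀ (norm_ne_zero_iff.mpr hvne), one_smul, hv]
  abel

/-- Exclusive boundary point construction: if `K` is closed convex, `Hj` closed, `o` interior
to both, and some point of `K` is outside `Hj`, then there is a point interior to `K` and on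
the frontier of `Hj`. -/
lemma exists_exclusive_point {K Hj : Set Plane} (hKcv : Convex ℝ K) (hjcl : IsClosed Hj)
    {o q : Plane} (hoK : o ∈ interior K) (hoj : o ∈ interior Hj) (hq : q ∈ K) (hqj : q ∉ Hj) :
    ∃ p, p ∈ interior K ∧ p ∈ frontier Hj := by
  -- Step 1: find q' in the interior of K, outside Hj
  obtain ⟨q', hq'K, hq'j⟩ : ∃ q', q' ∈ interior K ∧ q' ∉ Hj := by
    set γ₁ := fun t : ℝ => t • o + (1 - t) • q with hγ₁
    have hcont : Continuous γ₁ := by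
      apply Continuous.add
      · exact continuous_id.smul continuous_const
      · exact (continuous_const.sub continuous_id).smul continuous_const
    have htend : Filter.Tendsto γ₁ (nhdsWithin 0 (Set.Ioi 0)) (𝓝 q) := by
      have h0 : γ₁ 0 = q := by simp [hγ₁]
      have := hcont.tendsto 0
      rw [h0] at this
      exact this.mono_left nhdsWithin_le_nhds
    have hev1 : ∀ᶠ t in nhdsWithin 0 (Set.Ioi 0), γ₁ t ∉ Hj :=
      htend.eventually (hjcl.isOpen_compl.mem_nhds hqj)
    have hev2 : ∀ᶠ t in nhdsWithin 0 (Set.Ioi 0), t ∈ Set.Ioo (0:ℝ) 1 :=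
      Ioo_mem_nhdsGT_of_mem (by norm_num : (0:ℝ) ∈ Set.Ico (0:ℝ) 1)
    obtain ⟨t, ht1, ht2⟩ := (hev1.and hev2).exists
    refine ⟨γ₁ t, ?_, ht1⟩
    exact hKcv.combo_interior_closure_mem_interior hoK (subset_closure hq) ht2.1
      (by linarith [ht2.2]) (by ring)
  -- Step 2: find the last point on [o, q'] inside Hj
  set γ := fun t : ℝ => t • q' + (1 - t) • o with hγ
  have hcont : Continuous γ := by
    apply Continuous.add
    · exact continuous_id.smul continuous_const
    · exact (continuous_const.sub continuous_id).smul continuous_const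
  set Tset := Set.Icc (0:ℝ) 1 ∩ γ ⁻¹' Hj with hTset
  have hTcp : IsCompact Tset := isCompact_Icc.inter_right (hjcl.preimage hcont)
  have hTne : Tset.Nonempty := by
    refine ⟨0, ⟨le_refl 0, zero_le_one⟩, ?_⟩
    show γ 0 ∈ Hj
    simpa [hγ] using interior_subset hoj
  set t₀ := sSup Tset with ht₀
  have htmem : t₀ ∈ Tset := hTcp.sSup_mem hTne
  have hbdd : BddAbove Tset := hTcp.isBounded.bddAbove
  have ht1 : t₀ ≠ 1 := by
    intro h
    apply hq'j
    have := htmem.2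
    show q' ∈ Hj
    simpa [hγ, h] using this
  have ht01 : t₀ < 1 := lt_of_le_of_ne htmem.1.2 ht1
  set p := γ t₀ with hp
  have hpj : p ∈ Hj := htmem.2
  have hpnotint : p ∉ interior Hj := by
    intro hint
    have htd : Filter.Tendsto γ (nhdsWithin t₀ (Set.Ioi t₀)) (𝓝 p) :=
      (hcont.tendsto t₀).mono_left nhdsWithin_le_nhds
    have hev1 : ∀ᶠ t in nhdsWithin t₀ (Set.Ioi t₀), γ t ∈ Hj :=
      htd.eventually (mem_nhds_iff.mpr ⟨interior Hj, interior_subset, isOpen_interior, hint⟩)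
    have hev2 : ∀ᶠ t in nhdsWithin t₀ (Set.Ioi t₀), t ∈ Set.Ioo t₀ 1 :=
      Ioo_mem_nhdsGT_of_mem (Set.mem_Ico.mpr ⟨le_refl _, ht01⟩)
    obtain ⟨t, htj, htoo⟩ := (hev1.and hev2).exists
    have : t ∈ Tset := ⟨⟨le_trans htmem.1.1 htoo.1.le, htoo.2.le⟩, htj⟩
    exact absurd (le_csSup hbdd this) (not_le.mpr htoo.1)
  have hpfr : p ∈ frontier Hj := by
    rw [hjcl.frontier_eq]
    exact ⟨hpj, hpnotint⟩
  have ht0 : t₀ ≠ 0 := by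
    intro h
    apply hpnotint
    show γ t₀ ∈ interior Hj
    simpa [hγ, h] using hoj
  have hpint : p ∈ interior K := by
    apply hKcv.combo_interior_closure_mem_interior hq'K
      (subset_closure (interior_subset hoK))
      (lt_of_le_of_ne htmem.1.1 (Ne.symm ht0)) (by linarith) (by ring)
  exact ⟨p, hpint, hpfr⟩

lemma int_cases01 {m : ℤ} (h1 : -(2 * π) < 2 * π * m) (h2 : 2 * π * m < 4 * π) :
    m = 0 ∨ m = 1 := by
  have hπ := Real.pi_pos
  have hm1 : (-1 : ℝ) < (m : ℝ) := by nlinarith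
  have hm2 : (m : ℝ) < 2 := by nlinarith
  have h1' : (-1 : ℤ) < m := by exact_mod_cast hm1
  have h2' : m < 2 := by exact_mod_cast hm2
  omega

lemma int_zero {m : ℤ} (h1 : -(2 * π) < 2 * π * m) (h2 : 2 * π * m < 2 * π) : m = 0 := by
  have hπ := Real.pi_pos
  have hm1 : (-1 : ℝ) < (m : ℝ) := by nlinarith
  have hm2 : (m : ℝ) < 1 := by nlinarith
  have h1' : (-1 : ℤ) < m := by exact_mod_cast hm1
  have h2' : m < 1 := by exact_mod_cast hm2
  omega

theorem stmt10 (C : Set Plane) (hC : IsStrictConvexDomain C) (hCs : IsSmoothDomain C)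
    (n : ℕ) (hn : 2 ≤ n) (x : Fin n → Plane) (l : Fin n → ℝ) (hl : ∀ i, 0 < l i)
    (H : Fin n → Set Plane) (hH : ∀ i, H i = x i +ᵥ l i • C)
    (hint : (interior (⋂ i, H i)).Nonempty)
    (hred : ∀ j : Fin n, (⋂ i, H i) ⊂ ⋂ i ∈ {i : Fin n | i ≠ j}, H i) :
    (n : ℕ∞) ≤ {p : Plane | IsSingularPt (⋂ i, H i) p}.encard := by
  obtain ⟨⟨hCcp, hCcv, hCint⟩, hCstrict⟩ := hC
  have hCcl : IsClosed C := hCcp.isClosed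
  set Hall := ⋂ i, H i with hHall
  -- basic facts about the homothets
  have hHcp : ∀ i, IsCompact (H i) := by
    intro i
    rw [hH i, homothet_eq_image _ (hl i).ne']
    exact hCcp.image (homo _ _).continuous
  have hHcl : ∀ i, IsClosed (H i) := fun i => (hHcp i).isClosed
  have hHcv : ∀ i, Convex ℝ (H i) := by
    intro i
    rw [hH i]
    exact (hCcv.smul _).vadd _
  have hHallcl : IsClosed Hall := isClosed_iInter hHcl
  have hHallcv : Convex ℝ Hall := convex_iInter fun i => hHcv i
  have i0 : Fin n := ⟨0, by omega⟩
  have hHallcp : IsCompact Hall :=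
    (hHcp i0).of_isClosed_subset hHallcl (Set.iInter_subset _ i0)
  obtain ⟨o, ho⟩ := hint
  have hintH : interior Hall = ⋂ i, interior (H i) := interior_iInter_of_finite H
  have hsubHi : ∀ i, Hall ⊆ H i := fun i => Set.iInter_subset _ i
  have hintsub : ∀ i, interior Hall ⊆ interior (H i) := fun i => interior_mono (hsubHi i)
  -- K j
  set K := fun j : Fin n => ⋂ i ∈ {i : Fin n | i ≠ j}, H i with hK
  have hKcv : ∀ j, Convex ℝ (K j) := fun j =>
    convex_iInter fun i => convex_iInter fun _ => hHcv i
  have hKsub : ∀ j i, i ≠ j → K j ⊆ H i := fun j i hij =>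
    Set.biInter_subset_of_mem hij
  have hHK : ∀ j, Hall = K j ∩ H j := by
    intro j
    ext z
    simp only [hHall, Set.mem_iInter, hK, Set.mem_inter_iff, Set.mem_setOf_eq]
    constructor
    · intro h
      exact ⟨fun i _ => h i, h j⟩
    · rintro ⟨h1, h2⟩ i
      by_cases hij : i = j
      · rw [hij]; exact h2
      · exact h1 i hij
  have hHsubK : ∀ j, Hall ⊆ K j := fun j => (hred j).subset
  have hoK : ∀ j, o ∈ interior (K j) := fun j => interior_mono (hHsubK j) ho
  have hoHj : ∀ j, o ∈ interior (H j) := fun j => hintsub j ho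
  -- exclusive points
  have hexcl : ∀ j, ∃ p, p ∈ interior (K j) ∧ p ∈ frontier (H j) := by
    intro j
    obtain ⟨q, hqK, hqH⟩ := Set.exists_of_ssubset (hred j)
    have hqj : q ∉ H j := by
      intro h
      exact hqH ((hHK j).symm ▸ ⟨hqK, h⟩)
    exact exists_exclusive_point (hKcv j) (hHcl j) (hoK j) (hoHj j) hqK hqj
  choose p hpK hpfr using hexcl
  have hpint : ∀ j i, i ≠ j → p j ∈ interior (H i) := fun j i hij =>
    interior_mono (hKsub j i hij) (hpK j)
  have hpfrH : ∀ j, p j ∈ frontier Hall := by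
    intro j
    rw [hHallcl.frontier_eq]
    constructor
    · rw [hHK j]
      exact ⟨interior_subset (hpK j), (hHcl j).frontier_subset (hpfr j)⟩
    · intro h
      exact ((hHcl j).frontier_eq ▸ hpfr j).2 (hintsub j h)
  -- singularity criterion
  have hsing : ∀ z i j, i ≠ j → z ∈ frontier Hall → z ∈ frontier (H i) →
      z ∈ frontier (H j) → IsSingularPt Hall z := by
    intro z i j hij hzfr hzfi hzfj
    have hIi : (interior (H i)).Nonempty := ⟨o, hoHj i⟩
    have hIj : (interior (H j)).Nonempty := ⟨o, hoHj j⟩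
    obtain ⟨u, hu⟩ := exists_outer_normal (hHcv i) (hHcl i) hIi hzfi
    obtain ⟨v, hv⟩ := exists_outer_normal (hHcv j) (hHcl j) hIj hzfj
    have huH : IsOuterNormalAt Hall z u := ⟨hu.1, fun y hy => hu.2 y (hsubHi i hy)⟩
    have hvH : IsOuterNormalAt Hall z v := ⟨hv.1, fun y hy => hv.2 y (hsubHi j hy)⟩
    refine ⟨hzfr, u, v, ?_, huH, hvH⟩
    intro huv
    -- if the normals coincide, one homothet is contained in the other: contradiction
    have hu0 : u ≠ 0 := by
      intro h
      have h1 := hu.1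
      rw [h, norm_zero] at h1
      exact one_ne_zero h1.symm
    -- boundary points of C corresponding to z
    have hfrHi : frontier (H i) = x i +ᵥ l i • frontier C := by
      rw [hH i]; exact frontier_homothet _ (hl i).ne' _
    have hfrHj : frontier (H j) = x j +ᵥ l j • frontier C := by
      rw [hH j]; exact frontier_homothet _ (hl j).ne' _
    rw [hfrHi, homothet_eq_image _ (hl i).ne', Set.mem_image] at hzfi
    obtain ⟨ci, hci, hzi⟩ := hzfi
    rw [hfrHj, homothet_eq_image _ (hl j).ne', Set.mem_image] at hzfj
    obtain ⟨cj, hcj, hzj⟩ := hzfj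
    rw [homo_apply] at hzi hzj
    -- u is an outer normal of C at both ci and cj
    have hnci : IsOuterNormalAt C ci u := by
      rw [← isOuterNormalAt_homothet (x i) (hl i) ci u, ← hH i]
      rw [hzi]
      exact hu
    have hncj : IsOuterNormalAt C cj u := by
      rw [← isOuterNormalAt_homothet (x j) (hl j) cj u, ← hH j]
      rw [hzj]
      rw [huv]
      exact hv
    have hceq : ci = cj := by
      apply strict_max_unique ⟨⟨hCcp, hCcv, hCint⟩, hCstrict⟩ hu0
        (hCcl.frontier_subset hci) (hCcl.frontier_subset hcj) hnci.2 hncj.2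
    rw [hceq] at hzi
    -- common support point: one homothet is inside the other
    rcases le_total (l i) (l j) with hle | hle
    · have hsub : H i ⊆ H j := by
        rw [hH i, hH j]
        exact homothet_subset hCcv (hl i) (hl j) hle (hCcl.frontier_subset hcj)
          (hzi.trans hzj.symm)
      apply (hred j).2
      intro w hw
      rw [hHK j]
      exact ⟨hw, hsub (hKsub j i hij hw)⟩
    · have hsub : H j ⊆ H i := by
        rw [hH i, hH j]
        exact homothet_subset hCcv (hl j) (hl i) hle (hCcl.frontier_subset hcj)
          (hzj.trans hzi.symm)
      apply (hred i).2
      intro w hw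
      rw [hHK i]
      exact ⟨hw, hsub (hKsub i j (Ne.symm hij) hw)⟩
  -- parametrize the boundary
  obtain ⟨T, hTcont, hTfr, hTper, hTinj, hTsurj⟩ := exists_param hHallcv hHallcp ho
  have hθex : ∀ j, ∃ θ ∈ Set.Ioc (-π) π, T θ = p j := fun j => hTsurj (p j) (hpfrH j)
  choose θ hθmem hθT using hθex
  have hfrint : ∀ (i : Fin n) (w : Plane), w ∈ frontier (H i) → w ∉ interior (H i) :=
    fun i w hw => ((hHcl i).frontier_eq ▸ hw).2
  have hθdist : ∀ j k, j ≠ k → θ j ≠ θ k := by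
    intro j k hjk h
    have : p j = p k := by rw [← hθT j, ← hθT k, h]
    exact hfrint k (p k) (hpfr k) (this ▸ hpint j k (Ne.symm hjk))
  -- the finite set of angles
  set S : Finset ℝ :=
    Finset.image θ Finset.univ ∪ Finset.image (fun j => θ j + 2 * π) Finset.univ with hS
  have hπ := Real.pi_pos
  have hfne : ∀ j, (S.filter fun t => θ j < t).Nonempty := by
    intro j
    refine ⟨θ j + 2 * π, Finset.mem_filter.mpr ⟨?_, by linarith⟩⟩
    apply Finset.mem_union_right
    exact Finset.mem_image.mpr ⟨j, Finset.mem_univ j, rfl⟩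
  set succ : Fin n → ℝ := fun j => (S.filter fun t => θ j < t).min' (hfne j) with hsuccdef
  have hgt : ∀ j, θ j < succ j := fun j =>
    (Finset.mem_filter.mp ((S.filter fun t => θ j < t).min'_mem (hfne j))).2
  have hmin : ∀ j t, t ∈ S → θ j < t → succ j ≤ t := fun j t ht h =>
    Finset.min'_le _ t (Finset.mem_filter.mpr ⟨ht, h⟩)
  have hsuccS : ∀ j, succ j ∈ S := fun j =>
    (Finset.mem_filter.mp ((S.filter fun t => θ j < t).min'_mem (hfne j))).1
  have hlt : ∀ j, succ j < θ j + 2 * π := by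
    intro j
    have : Nontrivial (Fin n) := Fin.nontrivial_iff_two_le.mpr hn
    obtain ⟨k, hk⟩ := exists_ne j
    rcases lt_or_ge (θ j) (θ k) with h | h
    · have h1 : succ j ≤ θ k := hmin j (θ k)
        (Finset.mem_union_left _ (Finset.mem_image.mpr ⟨k, Finset.mem_univ k, rfl⟩)) h
      have h2 := (hθmem k).2
      have h3 := (hθmem j).1
      linarith
    · have hlt' : θ k < θ j := lt_of_le_of_ne h (hθdist k j hk)
      have h1 : succ j ≤ θ k + 2 * π := by
        apply hmin j (θ k + 2 * π)
          (Finset.mem_union_right _ (Finset.mem_image.mpr ⟨k, Finset.mem_univ k, rfl⟩))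
        have h2 := (hθmem k).1
        have h3 := (hθmem j).2
        linarith
      linarith
  -- the open interval (θ j, succ j) contains no angle mod 2π
  have hempty : ∀ j t, θ j < t → t < succ j → ∀ k (m : ℤ), t ≠ θ k + 2 * π * m := by
    intro j t h1 h2 k m heq
    have hbk1 := (hθmem k).1
    have hbk2 := (hθmem k).2
    have hbj1 := (hθmem j).1
    have hbj2 := (hθmem j).2
    have ht3 : t < 3 * π := by
      have := hlt j
      linarith
    have h2pm : 2 * π * m = t - θ k := by rw [heq]; ring
    have hm1 : -(2 * π) < 2 * π * m := by rw [h2pm]; linarith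
    have hm2 : 2 * π * m < 4 * π := by rw [h2pm]; linarith
    rcases int_cases01 hm1 hm2 with h0 | h0
    · rw [h0] at heq
      push_cast at heq
      rw [mul_zero, add_zero] at heq
      have : t ∈ S := heq ▸
        Finset.mem_union_left _ (Finset.mem_image.mpr ⟨k, Finset.mem_univ k, rfl⟩)
      exact absurd (hmin j t this h1) (not_le.mpr h2)
    · rw [h0] at heq
      push_cast at heq
      rw [mul_one] at heq
      have : t ∈ S := heq ▸
        Finset.mem_union_right _ (Finset.mem_image.mpr ⟨k, Finset.mem_univ k, rfl⟩)
      exact absurd (hmin j t this h1) (not_le.mpr h2)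
  -- the owner of succ j
  have howner : ∀ j, ∃ k, k ≠ j ∧ T (succ j) = p k := by
    intro j
    rcases Finset.mem_union.mp (hsuccS j) with h | h
    · obtain ⟨k, _, hk⟩ := Finset.mem_image.mp h
      refine ⟨k, ?_, by rw [← hk]; exact hθT k⟩
      intro hkj
      rw [hkj] at hk
      have := hgt j
      rw [hk] at this
      exact lt_irrefl _ this
    · obtain ⟨k, _, hk⟩ := Finset.mem_image.mp h
      refine ⟨k, ?_, by rw [← hk, hTper]; exact hθT k⟩
      intro hkj
      rw [hkj] at hk
      have := hlt j
      rw [hk] at this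
      exact lt_irrefl _ this
  -- the arc argument: a singular point strictly inside each interval
  have harc : ∀ j, ∃ τ, θ j < τ ∧ τ < succ j ∧ IsSingularPt Hall (T τ) := by
    intro j
    obtain ⟨k, hkj, hTk⟩ := howner j
    set A := T '' Set.Icc (θ j) (succ j) with hA
    have hApre : IsPreconnected A := (isPreconnected_Icc).image T hTcont.continuousOn
    set X := frontier Hall ∩ frontier (H j) with hX
    set Y := ⋃ i ∈ {i : Fin n | i ≠ j}, (frontier Hall ∩ frontier (H i)) with hY
    have hXcl : IsClosed X := isClosed_frontier.inter isClosed_frontier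
    have hYcl : IsClosed Y := by
      apply Set.Finite.isClosed_biUnion (Set.toFinite _)
      exact fun i _ => isClosed_frontier.inter isClosed_frontier
    have hcover : A ⊆ X ∪ Y := by
      rintro a ⟨τ, hτ, rfl⟩
      have hafr : T τ ∈ frontier Hall := hTfr τ
      have haH : T τ ∈ Hall := hHallcl.frontier_subset hafr
      have hanotint : T τ ∉ interior Hall := (hHallcl.frontier_eq ▸ hafr).2
      rw [hintH] at hanotint
      obtain ⟨i, hi⟩ : ∃ i, T τ ∉ interior (H i) := by
        by_contra hcon
        push_neg at hcon
        exact hanotint (Set.mem_iInter.mpr hcon)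
      have hai : T τ ∈ frontier (H i) := by
        rw [(hHcl i).frontier_eq]
        exact ⟨hsubHi i haH, hi⟩
      by_cases hij : i = j
      · left; exact ⟨hafr, hij ▸ hai⟩
      · right
        exact Set.mem_biUnion hij ⟨hafr, hai⟩
    have hXA : (A ∩ X).Nonempty := by
      refine ⟨p j, ⟨θ j, ⟨le_refl _, (hgt j).le⟩, hθT j⟩, hpfrH j, hpfr j⟩
    have hYA : (A ∩ Y).Nonempty := by
      refine ⟨p k, ⟨succ j, ⟨(hgt j).le, le_refl _⟩, hTk⟩, ?_⟩
      exact Set.mem_biUnion hkj ⟨hpfrH k, hpfr k⟩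
    obtain ⟨q, hqA, hqX, hqY⟩ :=
      isPreconnected_closed_iff.mp hApre X Y hXcl hYcl hcover hXA hYA
    obtain ⟨i, hij, hqi⟩ := Set.mem_iUnion₂.mp hqY
    obtain ⟨τ, hτI, hτq⟩ := hqA
    have hqsing : IsSingularPt Hall q := hsing q i j hij hqX.1 hqi.2 hqX.2
    have hqpj : q ≠ p j := by
      intro h
      exact hfrint i q hqi.2 (h ▸ hpint j i hij)
    have hqpk : q ≠ p k := by
      intro h
      exact hfrint j q hqX.2 (h ▸ hpint k j (Ne.symm hkj))
    refine ⟨τ, ?_, ?_, hτq ▸ hqsing⟩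
    · rcases lt_or_eq_of_le hτI.1 with h | h
      · exact h
      · exact absurd (by rw [← hτq, ← h, hθT j]) hqpj
    · rcases lt_or_eq_of_le hτI.2 with h | h
      · exact h
      · exact absurd (by rw [← hτq, h, hTk]) hqpk
  choose τ hτ1 hτ2 hτsing using harc
  -- injectivity
  have hinj : Function.Injective fun j => T (τ j) := by
    intro j j' heq
    by_contra hjj'
    simp only at heq
    obtain ⟨m, hm⟩ := hTinj (τ j') (τ j) heq.symm
    have hτeq : τ j' = τ j + 2 * π * m := by linarith
    rcases lt_trichotomy (θ j' - 2 * π * m) (θ j) with hcase | hcase | hcase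
    · -- θ j + 2πm lies in (θ j', succ j')
      apply hempty j' (θ j + 2 * π * m) (by linarith) (by nlinarith [hτ1 j, hτ2 j', hτeq]) j m rfl
    · -- θ j = θ j' - 2πm forces m = 0, contradiction with distinctness
      have hbj1 := (hθmem j).1
      have hbj2 := (hθmem j).2
      have hbj'1 := (hθmem j').1
      have hbj'2 := (hθmem j').2
      have hm1 : -(2*π) < 2 * π * m := by linarith
      have hm2 : 2 * π * m < 2 * π := by linarith
      have := int_zero hm1 hm2
      rw [this] at hcase
      push_cast at hcase
      rw [mul_zero, sub_zero] at hcase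
      exact hθdist j' j (Ne.symm hjj') hcase
    · -- θ j' - 2πm lies in (θ j, succ j)
      apply hempty j (θ j' - 2 * π * m) hcase (by linarith [hτ1 j', hτ2 j]) j' (-m) (by push_cast; ring)
  -- conclusion
  have hmaps : Set.MapsTo (fun j => T (τ j)) Set.univ {p : Plane | IsSingularPt Hall p} :=
    fun j _ => hτsing j
  have hcard := Set.encard_le_encard_of_injOn hmaps (hinj.injOn)
  rw [Set.encard_univ] at hcard
  simpa using hcard
end
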